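/- Let μ be a probability measure on R^N that is stationary for the Elo Markov chain, i.e. X =(dist) X + K(S^{IJ} − b(X^I − X^J))(e_I − e_J), where (I,J) is a uniform ordered pair of distinct indices independent of X, and conditionally on (I,J) = (i,j) the score S^{ij} is independent of X with E[S^{ij}] = b(ρ^i − ρ^j). Assume b : R → (−1,1) is odd and measurable, and X is integrable. Then for every index i: E[Σ_{j ≠ i} b(X^i − X^j)] = Σ_{j ≠ i} b(ρ^i − ρ^j). -/

import Mathlib

open MeasureTheory ProbabilityTheory

theorem stmt_18 {Ω : Type*} [MeasureSpace Ω] [IsProbabilityMeasure (ℙ : Measure Ω)]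
    (N : ℕ) (hN : 2 ≤ N) (ρ : Fin N → ℝ) (K : ℝ) (hK : 0 < K)
    (b : ℝ → ℝ) (hb_meas : Measurable b) (hb_odd : ∀ u, b (-u) = -b u)
    (hb_mono : Monotone b) (hb_range : ∀ u, b u ∈ Set.Ioo (-1 : ℝ) 1)
    (X : Ω → (Fin N → ℝ)) (hX_meas : Measurable X) (hX_int : Integrable X)
    (S : Fin N → Fin N → Ω → ℝ) (hS_meas : ∀ i j, Measurable (S i j))
    (hS_range : ∀ i j ω, S i j ω ∈ Set.Icc (-1 : ℝ) 1)
    (hS_mean : ∀ i j : Fin N, i ≠ j → (∫ ω, S i j ω) = b (ρ i - ρ j))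
    (hS_sym : ∀ i j : Fin N, i ≠ j →
      Measure.map (S j i) ℙ = Measure.map (fun ω => -(S i j ω)) ℙ)
    (hS_indepX : ∀ i j : Fin N, i ≠ j → IndepFun (S i j) X)
    (IJ : Ω → Fin N × Fin N) (hIJ_meas : Measurable IJ)
    (hIJ_unif : ∀ i j : Fin N, i ≠ j →
      ℙ {ω | IJ ω = (i, j)} = 1 / ((N : ENNReal) * ((N : ENNReal) - 1)))
    (hIJ_distinct : ∀ᵐ ω ∂ℙ, (IJ ω).1 ≠ (IJ ω).2)
    (hIJ_indep : IndepFun IJ (fun ω => (X ω, fun i j => S i j ω)))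
    (hstat : Measure.map X ℙ = Measure.map (fun ω =>
      X ω + (K * (S (IJ ω).1 (IJ ω).2 ω - b (X ω (IJ ω).1 - X ω (IJ ω).2))) •
        (Pi.single (IJ ω).1 (1 : ℝ) - Pi.single (IJ ω).2 (1 : ℝ))) ℙ) :
    ∀ i : Fin N,
      (∫ ω, ∑ j ∈ Finset.univ.erase i, b (X ω i - X ω j)) =
        ∑ j ∈ Finset.univ.erase i, b (ρ i - ρ j) := by
  -- auxiliary facts
  have hbd_b : ∀ u, |b u| ≤ 1 := fun u => abs_le.2 ⟨(hb_range u).1.le, (hb_range u).2.le⟩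
  have hbd_S : ∀ j k ω, |S j k ω| ≤ 1 := fun j k ω =>
    abs_le.2 ⟨(hS_range j k ω).1, (hS_range j k ω).2⟩
  have hXd_meas : ∀ j k : Fin N, Measurable fun ω => b (X ω j - X ω k) := fun j k =>
    hb_meas.comp (((measurable_pi_apply j).comp hX_meas).sub
      ((measurable_pi_apply k).comp hX_meas))
  have int_of_bdd : ∀ (f : Ω → ℝ) (C : ℝ), Measurable f → (∀ ω, |f ω| ≤ C) → Integrable f := by
    intro f C hf h
    refine (integrable_const C).mono' hf.aestronglyMeasurable ?_
    filter_upwards with ω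
    simpa using h ω
  have hb_int : ∀ j k : Fin N, Integrable fun ω => b (X ω j - X ω k) := fun j k =>
    int_of_bdd _ 1 (hXd_meas j k) (fun ω => hbd_b _)
  have hS_int : ∀ j k : Fin N, Integrable (S j k) := fun j k =>
    int_of_bdd _ 1 (hS_meas j k) (fun ω => hbd_S j k ω)
  intro i
  classical
  set X' : Ω → Fin N → ℝ := fun ω =>
      X ω + (K * (S (IJ ω).1 (IJ ω).2 ω - b (X ω (IJ ω).1 - X ω (IJ ω).2))) •
        (Pi.single (IJ ω).1 (1 : ℝ) - Pi.single (IJ ω).2 (1 : ℝ)) with hX'def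
  set c : Fin N → Fin N × Fin N → ℝ := fun l p =>
    (if l = p.1 then (1:ℝ) else 0) - (if l = p.2 then (1:ℝ) else 0) with hcdef
  set g0 : Fin N × Fin N → Ω → ℝ := fun p ω =>
    K * (S p.1 p.2 ω - b (X ω p.1 - X ω p.2)) with hg0def
  set T : Fin N → Fin N × Fin N → Ω → ℝ := fun l p ω =>
    (if IJ ω = p then (1:ℝ) else 0) * (g0 p ω * c l p) with hTdef
  have hc_bd : ∀ l p, |c l p| ≤ 2 := by
    intro l p; simp only [hcdef]; split_ifs <;> norm_num
  have hg0_meas : ∀ p, Measurable (g0 p) := fun p =>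
    measurable_const.mul ((hS_meas p.1 p.2).sub (hXd_meas p.1 p.2))
  have hg0_bd : ∀ p ω, |g0 p ω| ≤ K * 2 := by
    intro p ω
    simp only [hg0def, abs_mul, abs_of_pos hK]
    have h1 := hbd_S p.1 p.2 ω
    have h2 := hbd_b (X ω p.1 - X ω p.2)
    have := abs_sub (S p.1 p.2 ω) (b (X ω p.1 - X ω p.2))
    nlinarith [abs_sub_abs_le_abs_sub (S p.1 p.2 ω) (b (X ω p.1 - X ω p.2))]
  have hT_meas : ∀ l p, Measurable (T l p) := by
    intro l p
    have hs : MeasurableSet {ω | IJ ω = p} := hIJ_meas (measurableSet_singleton p)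
    exact (Measurable.ite hs measurable_const measurable_const).mul
      ((hg0_meas p).mul measurable_const)
  have hT_int : ∀ l p, Integrable (T l p) := by
    intro l p
    refine int_of_bdd _ (1 * (K * 2 * 2)) (hT_meas l p) ?_
    intro ω
    simp only [hTdef, abs_mul]
    have h1 : |if IJ ω = p then (1:ℝ) else 0| ≤ 1 := by split_ifs <;> norm_num
    have h2 := hg0_bd p ω
    have h3 := hc_bd l p
    have h4 : (0:ℝ) ≤ |g0 p ω| := abs_nonneg _
    have h5 : (0:ℝ) ≤ |c l p| := abs_nonneg _
    have h6 : |g0 p ω| * |c l p| ≤ (K * 2) * 2 :=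
      mul_le_mul h2 h3 h5 (by positivity)
    have h7 : (0:ℝ) ≤ |if IJ ω = p then (1:ℝ) else 0| := abs_nonneg _
    nlinarith
  -- pointwise identity
  have hpt : ∀ (l : Fin N) (ω : Ω), X' ω l = X ω l + ∑ p : Fin N × Fin N, T l p ω := by
    intro l ω
    have hsum : ∑ p : Fin N × Fin N, T l p ω = g0 (IJ ω) ω * c l (IJ ω) := by
      simp only [hTdef, ite_mul, one_mul, zero_mul]
      rw [Finset.sum_ite_eq]
      simp only [Finset.mem_univ, if_true]
    rw [hsum]
    simp only [hX'def, Pi.add_apply, Pi.smul_apply, Pi.sub_apply, Pi.single_apply,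
      smul_eq_mul, hg0def, hcdef]
  have hXi_int : ∀ l : Fin N, Integrable (fun ω => X ω l) := by
    intro l
    have := (ContinuousLinearMap.proj l : (Fin N → ℝ) →L[ℝ] ℝ).integrable_comp hX_int
    simpa using this
  have hX'_meas : Measurable X' := by
    apply measurable_pi_lambda
    intro l
    have : (fun ω => X' ω l) = fun ω => X ω l + ∑ p : Fin N × Fin N, T l p ω :=
      funext (hpt l)
    rw [this]
    exact ((measurable_pi_apply l).comp hX_meas).add
      (Finset.measurable_sum _ fun p _ => hT_meas l p)
  -- stationarity gives equality of means
  have hmap : ∫ ω, X' ω i = ∫ ω, X ω i := by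
    have h1 : ∫ ω, X' ω i = ∫ x, x i ∂(Measure.map X' ℙ) :=
      (integral_map hX'_meas.aemeasurable (measurable_pi_apply i).aestronglyMeasurable).symm
    rw [h1, ← hstat, integral_map hX_meas.aemeasurable (measurable_pi_apply i).aestronglyMeasurable]
  have hsplit : ∫ ω, X' ω i = (∫ ω, X ω i) + ∑ p : Fin N × Fin N, ∫ ω, T i p ω := by
    calc ∫ ω, X' ω i = ∫ ω, (X ω i + ∑ p : Fin N × Fin N, T i p ω) := by
          exact integral_congr_ae (Filter.Eventually.of_forall (hpt i))
      _ = (∫ ω, X ω i) + ∫ ω, ∑ p : Fin N × Fin N, T i p ω := by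
          rw [integral_add (hXi_int i) (integrable_finset_sum _ fun p _ => hT_int i p)]
      _ = (∫ ω, X ω i) + ∑ p : Fin N × Fin N, ∫ ω, T i p ω := by
          rw [integral_finset_sum _ fun p _ => hT_int i p]
  have hzero : ∑ p : Fin N × Fin N, ∫ ω, T i p ω = 0 := by
    have := hmap.symm.trans hsplit
    linarith
  -- evaluate each term via independence
  have hTint_eq : ∀ p : Fin N × Fin N, ∫ ω, T i p ω =
      ((ℙ {ω | IJ ω = p}).toReal * ∫ ω, g0 p ω) * c i p := by
    intro p
    set f : Ω → ℝ := fun ω => if IJ ω = p then (1:ℝ) else 0 with hfdef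
    set g : Ω → ℝ := fun ω => g0 p ω * c i p with hgdef
    have hφ : Measurable (fun q : Fin N × Fin N => if q = p then (1:ℝ) else 0) :=
      measurable_of_countable _
    have hψ : Measurable (fun w : (Fin N → ℝ) × (Fin N → Fin N → ℝ) =>
        K * (w.2 p.1 p.2 - b (w.1 p.1 - w.1 p.2)) * c i p) := by
      apply Measurable.mul _ measurable_const
      apply Measurable.mul measurable_const
      apply Measurable.sub
      · exact (measurable_pi_apply p.2).comp ((measurable_pi_apply p.1).comp measurable_snd)
      · exact hb_meas.comp (((measurable_pi_apply p.1).comp measurable_fst).sub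
          ((measurable_pi_apply p.2).comp measurable_fst))
    have hind : IndepFun f g := by
      have := hIJ_indep.comp hφ hψ
      exact this
    have hf_int : Integrable f := by
      refine int_of_bdd _ 1 ?_ ?_
      · exact Measurable.ite (hIJ_meas (measurableSet_singleton p)) measurable_const
          measurable_const
      · intro ω; simp only [hfdef]; split_ifs <;> norm_num
    have hg_int : Integrable g := by
      refine int_of_bdd _ (K * 2 * 2) ((hg0_meas p).mul measurable_const) ?_
      intro ω
      simp only [hgdef, abs_mul]
      have h2 := hg0_bd p ω
      have h3 := hc_bd i p
      have h4 : (0:ℝ) ≤ |g0 p ω| := abs_nonneg _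
      have h5 : (0:ℝ) ≤ |c i p| := abs_nonneg _
      nlinarith
    have hmul := IndepFun.integral_mul_eq_mul_integral hind hf_int.aestronglyMeasurable hg_int.aestronglyMeasurable
    simp only [Pi.mul_apply] at hmul
    have hf_val : ∫ ω, f ω = (ℙ {ω | IJ ω = p}).toReal := by
      have hfe : f = Set.indicator {ω | IJ ω = p} (fun _ => (1:ℝ)) := by
        funext ω
        simp only [hfdef, Set.indicator_apply, Set.mem_setOf_eq]
      have hs : MeasurableSet {ω | IJ ω = p} := hIJ_meas (measurableSet_singleton p)
      rw [hfe, integral_indicator_const _ hs]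
      simp [Measure.real]
    have hg_val : ∫ ω, g ω = (∫ ω, g0 p ω) * c i p := by
      simp only [hgdef]
      exact integral_mul_const (c i p) (g0 p)
    calc ∫ ω, T i p ω = ∫ ω, f ω * g ω := rfl
      _ = (∫ ω, f ω) * ∫ ω, g ω := hmul
      _ = ((ℙ {ω | IJ ω = p}).toReal * ∫ ω, g0 p ω) * c i p := by
          rw [hf_val, hg_val, mul_assoc]
  -- abbreviations
  set P : Fin N × Fin N → ℝ := fun p => (ℙ {ω | IJ ω = p}).toReal with hPdef
  set h : Fin N × Fin N → ℝ := fun p => P p * ∫ ω, g0 p ω with hhdef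
  have hzero2 : ∑ p : Fin N × Fin N, h p * c i p = 0 := by
    rw [← hzero]
    exact Finset.sum_congr rfl fun p _ => (hTint_eq p).symm
  have hsum1 : ∑ p : Fin N × Fin N, h p * c i p = ∑ k : Fin N, (h (i,k) - h (k,i)) := by
    simp only [hcdef, mul_sub, mul_ite, mul_one, mul_zero]
    rw [Finset.sum_sub_distrib, Finset.sum_sub_distrib]
    congr 1
    · rw [Fintype.sum_prod_type]
      have : ∀ j : Fin N, (∑ k : Fin N, if i = j then h (j,k) else 0)
          = if i = j then (∑ k : Fin N, h (j,k)) else 0 := by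
        intro j; split_ifs <;> simp
      rw [Finset.sum_congr rfl fun j _ => this j, Finset.sum_ite_eq]
      simp
    · rw [Fintype.sum_prod_type_right]
      have : ∀ k : Fin N, (∑ j : Fin N, if i = k then h (j,k) else 0)
          = if i = k then (∑ j : Fin N, h (j,k)) else 0 := by
        intro k; split_ifs <;> simp
      rw [Finset.sum_congr rfl fun k _ => this k, Finset.sum_ite_eq]
      simp
  have hzero3 : ∑ k ∈ Finset.univ.erase i, (h (i,k) - h (k,i)) = 0 := by
    have hd := Finset.sum_erase_add Finset.univ (fun k => h (i,k) - h (k,i)) (Finset.mem_univ i)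
    have hz := hsum1 ▸ hzero2
    simp only [sub_self, add_zero] at hd
    rw [hd, hz]
  -- the constant
  set c0 : ℝ := (1 / ((N : ENNReal) * ((N : ENNReal) - 1))).toReal with hc0def
  have hxne0 : ((N : ENNReal) * ((N : ENNReal) - 1)) ≠ 0 := by
    apply mul_ne_zero
    · exact_mod_cast Nat.cast_ne_zero.mpr (by omega : N ≠ 0)
    · rw [Ne, tsub_eq_zero_iff_le]
      intro hle
      have : N ≤ 1 := by exact_mod_cast hle
      omega
  have hxnetop : ((N : ENNReal) * ((N : ENNReal) - 1)) ≠ ⊤ :=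
    ENNReal.mul_ne_top (ENNReal.natCast_ne_top N)
      (ne_top_of_le_ne_top (ENNReal.natCast_ne_top N) tsub_le_self)
  have hc0pos : 0 < c0 := by
    rw [hc0def, ENNReal.toReal_div]
    simp only [ENNReal.toReal_one]
    exact div_pos one_pos (ENNReal.toReal_pos hxne0 hxnetop)
  have hP : ∀ j k : Fin N, j ≠ k → P (j,k) = c0 := by
    intro j k hjk
    simp only [hPdef, hc0def]
    rw [hIJ_unif j k hjk]
  -- evaluate individual terms
  have hterm : ∀ k : Fin N, k ≠ i →
      h (i,k) - h (k,i) = (2 * c0 * K) * (b (ρ i - ρ k) - ∫ ω, b (X ω i - X ω k)) := by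
    intro k hki
    have hik : i ≠ k := hki.symm
    have hSki : (∫ ω, S k i ω) = -∫ ω, S i k ω := by
      have h1 : ∫ ω, S k i ω = ∫ x, x ∂(Measure.map (S k i) ℙ) :=
        (integral_map (hS_meas k i).aemeasurable aestronglyMeasurable_id).symm
      have h2 : ∫ x, x ∂(Measure.map (fun ω => -(S i k ω)) ℙ) = ∫ ω, -(S i k ω) :=
        integral_map ((hS_meas i k).neg).aemeasurable aestronglyMeasurable_id
      rw [h1, hS_sym i k hik, h2, integral_neg]
    have hbki : (∫ ω, b (X ω k - X ω i)) = -∫ ω, b (X ω i - X ω k) := by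
      rw [← integral_neg]
      congr 1
      funext ω
      rw [show X ω k - X ω i = -(X ω i - X ω k) by ring, hb_odd]
    have hg0ik : ∫ ω, g0 (i,k) ω
        = K * (b (ρ i - ρ k) - ∫ ω, b (X ω i - X ω k)) := by
      simp only [hg0def]
      rw [integral_const_mul, integral_sub (hS_int i k) (hb_int i k), hS_mean i k hik]
    have hg0ki : ∫ ω, g0 (k,i) ω
        = K * (-(b (ρ i - ρ k)) + ∫ ω, b (X ω i - X ω k)) := by
      simp only [hg0def]
      rw [integral_const_mul, integral_sub (hS_int k i) (hb_int k i), hSki, hbki,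
        hS_mean i k hik]
      ring
    simp only [hhdef]
    rw [hP i k hik, hP k i hki, hg0ik, hg0ki]
    ring
  have hfinal : ∑ k ∈ Finset.univ.erase i,
      (b (ρ i - ρ k) - ∫ ω, b (X ω i - X ω k)) = 0 := by
    rw [Finset.sum_congr rfl
      (fun k hk => hterm k (Finset.ne_of_mem_erase hk))] at hzero3
    rw [← Finset.mul_sum] at hzero3
    have hne : (2 * c0 * K) ≠ 0 := by positivity
    exact (mul_eq_zero.mp hzero3).resolve_left hne
  rw [integral_finset_sum _ (fun j _ => hb_int i j)]
  rw [Finset.sum_sub_distrib, sub_eq_zero] at hfinal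
  exact hfinal.symm
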